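/- If x ∈ ℝ^n is a Pareto stationary point, then d_ω(x) = 0 and β_ω(x) = 0. -/

import Mathlib

open Filter Topology
open scoped RealInnerProductSpace

noncomputable section

/-- `Euc n` is Euclidean `n`-space `ℝ^n`. -/
abbrev Euc (n : ℕ) := EuclideanSpace ℝ (Fin n)

/-- `HasDirDeriv f x d D` : the one-sided directional derivative of `f` at `x`
in direction `d` exists and equals `D`, i.e. `(f (x + α • d) - f x)/α → D` as `α → 0⁺`. -/
def HasDirDeriv {n : ℕ} (f : Euc n → ℝ) (x d : Euc n) (D : ℝ) : Prop :=
  Filter.Tendsto (fun α : ℝ => (f (x + α • d) - f x) / α)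
    (nhdsWithin 0 (Set.Ioi 0)) (nhds D)

/-- `x` is Pareto stationary for the objectives `F i`:
for every direction `d`, `max_i F_i'(x; d) ≥ 0`, i.e. some objective has
nonnegative directional derivative in direction `d`. -/
def ParetoStationary {n m : ℕ} (F : Fin m → Euc n → ℝ) (x : Euc n) : Prop :=
  ∀ d : Euc n, ∃ i : Fin m, ∃ D : ℝ, HasDirDeriv (F i) x d D ∧ 0 ≤ D

/-- `θ_x(d) = max_i { ⟪∇g_i(x), d⟫ + ½⟪d, B_i(x) d⟫ + h_i(x+d) - h_i(x) }`. -/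
def theta {n m : ℕ} (g h : Fin m → Euc n → ℝ)
    (B : Fin m → Euc n → (Euc n →L[ℝ] Euc n)) (x d : Euc n) : ℝ :=
  ⨆ i : Fin m, (⟪gradient (g i) x, d⟫ + (1 / 2) * ⟪d, B i x d⟫ + h i (x + d) - h i x)

/-- `φ_{ω,x}(d) = θ_x(d) + (ω/2)‖d‖²`. -/
def phi {n m : ℕ} (g h : Fin m → Euc n → ℝ)
    (B : Fin m → Euc n → (Euc n →L[ℝ] Euc n)) (ω : ℝ) (x d : Euc n) : ℝ :=
  theta g h B x d + (ω / 2) * ‖d‖ ^ 2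

lemma dirDeriv_le_aux {n : ℕ} (gi hi : Euc n → ℝ) (hgi : ContDiff ℝ 2 gi)
    (hhi : ConvexOn ℝ Set.univ hi) (x d : Euc n) (D : ℝ)
    (hD : HasDirDeriv (fun y => gi y + hi y) x d D) :
    D ≤ ⟪gradient gi x, d⟫ + (hi (x + d) - hi x) := by
  have hdiff : DifferentiableAt ℝ gi x :=
    (hgi.differentiable (by norm_num)).differentiableAt
  have hgrad : HasGradientAt gi (gradient gi x) x := hdiff.hasGradientAt
  have hfd := hgrad.hasFDerivAt
  have hline : HasDerivAt (fun α : ℝ => x + α • d) d 0 := by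
    simpa using ((hasDerivAt_id (0:ℝ)).smul_const d).const_add x
  have hcomp : HasDerivAt (fun α : ℝ => gi (x + α • d)) ⟪gradient gi x, d⟫ 0 := by
    have hfd' : HasFDerivAt gi ((InnerProductSpace.toDual ℝ (Euc n)) (gradient gi x))
        (x + (0:ℝ) • d) := by simpa using hfd
    have := hfd'.comp_hasDerivAt (x := (0:ℝ)) hline
    simp only [InnerProductSpace.toDual_apply_apply] at this
    exact this
  have hgT : Tendsto (fun α : ℝ => (gi (x + α • d) - gi x) / α)
      (nhdsWithin 0 (Set.Ioi 0)) (nhds ⟪gradient gi x, d⟫) := by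
    have := hasDerivAt_iff_tendsto_slope.mp hcomp
    refine this.mono_left (nhdsWithin_mono _ ?_) |>.congr (fun α => ?_) |>.mono_left le_rfl
    · intro a ha; exact ne_of_gt ha
    · simp [slope, div_eq_inv_mul]
  have hhT : Tendsto (fun α : ℝ => (hi (x + α • d) - hi x) / α)
      (nhdsWithin 0 (Set.Ioi 0)) (nhds (D - ⟪gradient gi x, d⟫)) := by
    have := hD.sub hgT
    refine this.congr fun α => ?_
    rw [div_sub_div_same]; ring_nf
  have hbound : ∀ᶠ α : ℝ in nhdsWithin 0 (Set.Ioi 0),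
      (hi (x + α • d) - hi x) / α ≤ hi (x + d) - hi x := by
    filter_upwards [Ioo_mem_nhdsGT_of_mem (by norm_num : (0:ℝ) ∈ Set.Ico 0 1)]
      with α hα
    obtain ⟨hα0, hα1⟩ := hα
    have hc : hi (x + α • d) ≤ (1 - α) * hi x + α * hi (x + d) := by
      have := hhi.2 (Set.mem_univ x) (Set.mem_univ (x + d))
        (by linarith : (0:ℝ) ≤ 1 - α) (le_of_lt hα0) (by ring)
      have he : (1 - α) • x + α • (x + d) = x + α • d := by
        module
      rw [he] at this
      simpa [smul_eq_mul] using this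
    rw [div_le_iff₀ hα0]
    nlinarith
  have := le_of_tendsto hhT hbound
  linarith

/-- if x is Pareto stationary then d_ω(x) = 0 and β_ω(x) = 0. -/
theorem pareto_stationary_imp_direction_zero
    {n m : ℕ} (g h : Fin m → Euc n → ℝ)
    (B : Fin m → Euc n → (Euc n →L[ℝ] Euc n))
    (hm : 0 < m)
    (hg : ∀ i, ContDiff ℝ 2 (g i))
    (hsc : ∀ i, ∃ a : ℝ, 0 < a ∧ ∀ x y : Euc n,
      a * ‖x - y‖ ^ 2 ≤ ⟪gradient (g i) x - gradient (g i) y, x - y⟫)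
    (hh : ∀ i, ConvexOn ℝ Set.univ (h i))
    (hBsymm : ∀ i x (u v : Euc n), ⟪B i x u, v⟫ = ⟪u, B i x v⟫)
    (hBpos : ∀ i x (d : Euc n), d ≠ 0 → 0 < ⟪d, B i x d⟫)
    (ω : ℝ) (hω : 0 < ω)
    (dω : Euc n → Euc n)
    (hmin : ∀ y d, phi g h B ω y (dω y) ≤ phi g h B ω y d)
    (x : Euc n)
    (hx : ParetoStationary (fun i y => g i y + h i y) x) :
    dω x = 0 ∧ phi g h B ω x (dω x) = 0 := by
  haveI : Nonempty (Fin m) := ⟨⟨0, hm⟩⟩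
  set d := dω x with hd
  have htheta0 : theta g h B x 0 = 0 := by
    simp [theta]
  have hphi0 : phi g h B ω x 0 = 0 := by
    simp [phi, htheta0]
  obtain ⟨i, D, hDd, hD0⟩ := hx d
  have hkey : D ≤ ⟪gradient (g i) x, d⟫ + (h i (x + d) - h i x) :=
    dirDeriv_le_aux (g i) (h i) (hg i) (hh i) x d D hDd
  have hBnn : 0 ≤ ⟪d, B i x d⟫ := by
    rcases eq_or_ne d 0 with hd0 | hd0
    · simp [hd0]
    · exact le_of_lt (hBpos i x d hd0)
  have hterm : (0:ℝ) + (1/2) * ⟪d, B i x d⟫ ≤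
      ⟪gradient (g i) x, d⟫ + (1/2) * ⟪d, B i x d⟫ + h i (x + d) - h i x := by
    linarith
  have hθ : (1/2) * ⟪d, B i x d⟫ ≤ theta g h B x d := by
    refine le_trans (by simpa using hterm) (le_ciSup ?_ i)
    exact (Set.finite_range _).bddAbove
  have hle0 : phi g h B ω x d ≤ 0 := by
    have := hmin x 0
    rw [hphi0] at this
    exact this
  have hnorm : (ω / 2) * ‖d‖ ^ 2 ≤ 0 := by
    have : (1/2) * ⟪d, B i x d⟫ + (ω / 2) * ‖d‖ ^ 2 ≤ phi g h B ω x d := by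
      unfold phi; linarith
    linarith
  have hdz : d = 0 := by
    have : ‖d‖ ^ 2 ≤ 0 := by
      nlinarith
    have : ‖d‖ = 0 := by nlinarith [norm_nonneg d]
    exact norm_eq_zero.mp this
  exact ⟨hdz, by rw [hdz]; exact hphi0⟩
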